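/- Bisimulation invariant first-order logic is nonelementarily more succinct than basic modal logic: for every n ≥ 1 there is a first-order formula φₙ(x) over the vocabulary {R} of size s(φₙ) = 3·2^{n+2} − 7 (hence O(2ⁿ)) whose class of pointed frames is bisimulation invariant and is definable in ML, but every ML-formula θ defining the same class of pointed frames has size s(θ) ≥ tower(n−1). -/

import Mathlib

universe u v

/-- A Kripke model for a set `Φ` of proposition symbols: a set of worlds `W`,
an accessibility relation `R` and a valuation `V`. -/
structure KripkeModel (Φ : Type) : Type (u + 1) where
  W : Type u
  R : W → W → Prop
  V : Φ → W → Prop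

/-- A pointed Kripke model: a Kripke model together with a distinguished world. -/
structure PointedModel (Φ : Type) : Type (u + 1) where
  M : KripkeModel.{u} Φ
  w : M.W

/-- Formulas of basic modal logic over the empty set of proposition symbols, in negation
normal form, generated from the atomic constants `⊤` and `⊥` by `∧`, `∨`, `◇`, `□`. -/
inductive MLF : Type where
  | top
  | bot
  | and (φ ψ : MLF)
  | or (φ ψ : MLF)
  | dia (φ : MLF)
  | box (φ : MLF)

/-- Standard Kripke semantics over frames (models for `Φ = ∅`). -/
def MLFSat (M : KripkeModel.{u} Empty) : M.W → MLF → Prop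
  | _, .top => True
  | _, .bot => False
  | w, .and φ ψ => MLFSat M w φ ∧ MLFSat M w ψ
  | w, .or φ ψ => MLFSat M w φ ∨ MLFSat M w ψ
  | w, .dia φ => ∃ x, M.R w x ∧ MLFSat M x φ
  | w, .box φ => ∀ x, M.R w x → MLFSat M x φ

/-- Literals over `Φ = ∅` are the atomic constants `⊤` and `⊥`. -/
def MLFIsLiteral : MLF → Prop
  | .top => True
  | .bot => True
  | _ => False

/-- The modal size `ms(φ)`: the number of modal operators `◇`, `□` in `φ`. -/
def mlfms : MLF → ℕ
  | .top => 0
  | .bot => 0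
  | .and φ ψ => mlfms φ + mlfms ψ
  | .or φ ψ => mlfms φ + mlfms ψ
  | .dia φ => mlfms φ + 1
  | .box φ => mlfms φ + 1

/-- The connective size `cs(φ)`: the number of binary connectives `∧`, `∨` in `φ`. -/
def mlfcs : MLF → ℕ
  | .top => 0
  | .bot => 0
  | .and φ ψ => mlfcs φ + mlfcs ψ + 1
  | .or φ ψ => mlfcs φ + mlfcs ψ + 1
  | .dia φ => mlfcs φ
  | .box φ => mlfcs φ

/-- A formula `φ` separates the classes `A` and `B` of pointed frames if `φ` is true in
every pointed frame of `A` and false in every pointed frame of `B`. -/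
def MLFSeparates (φ : MLF) (A B : Set (PointedModel.{u} Empty)) : Prop :=
  (∀ P ∈ A, MLFSat P.M P.w φ) ∧ (∀ P ∈ B, ¬ MLFSat P.M P.w φ)

/-- First-order formulas over the vocabulary `{R}` (with equality); variables are
natural numbers. -/
inductive FOForm : Type where
  | rel (x y : ℕ)
  | eq (x y : ℕ)
  | not (φ : FOForm)
  | and (φ ψ : FOForm)
  | or (φ ψ : FOForm)
  | ex (x : ℕ) (φ : FOForm)
  | all (x : ℕ) (φ : FOForm)

/-- Standard first-order semantics over a frame `(W, R)` under an assignment `s`. -/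
def FOSat {W : Type u} (R : W → W → Prop) (s : ℕ → W) : FOForm → Prop
  | .rel x y => R (s x) (s y)
  | .eq x y => s x = s y
  | .not φ => ¬ FOSat R s φ
  | .and φ ψ => FOSat R s φ ∧ FOSat R s ψ
  | .or φ ψ => FOSat R s φ ∨ FOSat R s ψ
  | .ex x φ => ∃ a : W, FOSat R (Function.update s x a) φ
  | .all x φ => ∀ a : W, FOSat R (Function.update s x a) φ

/-- The size of a first-order formula: the number of its quantifiers and binary
connectives (literals have size `0` and negation does not add to the size). -/
def fosize : FOForm → ℕ
  | .rel _ _ => 0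
  | .eq _ _ => 0
  | .not φ => fosize φ
  | .and φ ψ => fosize φ + fosize ψ + 1
  | .or φ ψ => fosize φ + fosize ψ + 1
  | .ex _ φ => fosize φ + 1
  | .all _ φ => fosize φ + 1

/-- Bisimilarity of pointed models: the standard back-and-forth relation. -/
def Bisimilar {Φ : Type} (M : KripkeModel.{u} Φ) (w : M.W)
    (N : KripkeModel.{v} Φ) (x : N.W) : Prop :=
  ∃ Z : M.W → N.W → Prop,
    Z w x ∧
    (∀ a b, Z a b → ∀ p, M.V p a ↔ N.V p b) ∧
    (∀ a b, Z a b → ∀ c, M.R a c → ∃ d, N.R b d ∧ Z c d) ∧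
    (∀ a b, Z a b → ∀ d, N.R b d → ∃ c, M.R a c ∧ Z c d)

/-- The exponential tower function: `tower 0 = 1` and `tower (n+1) = 2 ^ tower n`. -/
def tower : ℕ → ℕ
  | 0 => 1
  | n + 1 => 2 ^ tower n

/-- An `ML`-formula `θ` and a first-order formula `ψ(x)` (free variable `x` = variable
`0`) are equivalent if they define the same class of pointed frames. -/
def MLFOEquiv (θ : MLF) (ψ : FOForm) : Prop :=
  ∀ P : PointedModel.{u} Empty,
    MLFSat P.M P.w θ ↔ (∀ s : ℕ → P.M.W, s 0 = P.w → FOSat P.M.R s ψ)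


/-! ### Auxiliary development (Hella–Vilander style) -/

namespace HVAux

/-- Hierarchy of bisimulation types: `T 0` is trivial, `T (k+1)` = sets of `T k`. -/
def T : ℕ → Type
  | 0 => PUnit
  | k + 1 => T k → Prop

noncomputable instance Tdec (k : ℕ) : DecidableEq (T k) := Classical.decEq _

noncomputable instance Tfin : (k : ℕ) → Fintype (T k)
  | 0 => inferInstanceAs (Fintype PUnit)
  | k + 1 => @Pi.instFintype (T k) (fun _ => Prop) (Tdec k) (Tfin k) (fun _ => Prop.fintype)

theorem card_T : ∀ k : ℕ, Fintype.card (T k) = tower k := by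
  intro k
  induction k with
  | zero => simp [T, tower]; exact Fintype.card_unique
  | succ k ih =>
      have h1 : Fintype.card (T (k + 1)) = Fintype.card (T k → Prop) :=
        Fintype.card_congr (Equiv.refl _)
      rw [h1, Fintype.card_fun, Fintype.card_prop, ih, tower]

/-- The depth-`k` bisimulation type of a point. -/
def mtype {W : Type u} (R : W → W → Prop) : (k : ℕ) → W → T k
  | 0, _ => PUnit.unit
  | k + 1, w => fun t : T k => ∃ x, R w x ∧ mtype R k x = t

theorem mtype_succ_apply {W : Type u} (R : W → W → Prop) (k : ℕ) (w : W) (t : T k) :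
    mtype R (k + 1) w t ↔ ∃ x, R w x ∧ mtype R k x = t := Iff.rfl

theorem mtype_succ_eq {W : Type u} {W' : Type v} (R : W → W → Prop) (R' : W' → W' → Prop)
    (k : ℕ) (w : W) (v : W') :
    mtype R (k + 1) w = mtype R' (k + 1) v ↔
      ((∀ x, R w x → ∃ y, R' v y ∧ mtype R k x = mtype R' k y) ∧
       (∀ y, R' v y → ∃ x, R w x ∧ mtype R k x = mtype R' k y)) := by
  constructor
  · intro h
    constructor
    · intro x hx
      have hmem : mtype R' (k + 1) v (mtype R k x) := by
        rw [← h]; exact ⟨x, hx, rfl⟩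
      obtain ⟨y, hy, he⟩ := hmem
      exact ⟨y, hy, he.symm⟩
    · intro y hy
      have hmem : mtype R (k + 1) w (mtype R' k y) := by
        rw [h]; exact ⟨y, hy, rfl⟩
      exact hmem
  · rintro ⟨hf, hb⟩
    funext t
    apply propext
    constructor
    · rintro ⟨x, hx, rfl⟩
      obtain ⟨y, hy, he⟩ := hf x hx
      exact ⟨y, hy, he.symm⟩
    · rintro ⟨y, hy, rfl⟩
      exact hb y hy

/-! ### The FO formulas -/

/-- `eta k p q` expresses that the points `p` and `q` have the same depth-`k` type. -/
def eta : ℕ → ℕ → ℕ → FOForm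
  | 0, p, _ => .eq p p
  | k + 1, p, q =>
      .and
        (.all (max p q + 1) (.or (.not (.rel p (max p q + 1)))
          (.ex (max p q + 2) (.and (.rel q (max p q + 2))
            (eta k (max p q + 1) (max p q + 2))))))
        (.all (max p q + 1) (.or (.not (.rel q (max p q + 1)))
          (.ex (max p q + 2) (.and (.rel p (max p q + 2))
            (eta k (max p q + 1) (max p q + 2))))))

theorem fosize_eta : ∀ (k p q : ℕ), fosize (eta k p q) = 9 * 2 ^ k - 9 := by
  intro k
  induction k with
  | zero => intro p q; simp [eta, fosize]
  | succ k ih =>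
      intro p q
      have h2 : 2 ^ (k + 1) = 2 * 2 ^ k := by ring
      have h9 : 9 ≤ 9 * 2 ^ k := by
        have : 1 ≤ 2 ^ k := Nat.one_le_two_pow
        omega
      simp only [eta, fosize, ih]
      omega

theorem eta_sat {W : Type u} (R : W → W → Prop) :
    ∀ (k p q : ℕ) (s : ℕ → W),
      FOSat R s (eta k p q) ↔ mtype R k (s p) = mtype R k (s q) := by
  intro k
  induction k with
  | zero =>
      intro p q s
      constructor
      · intro _; rfl
      · intro _; show s p = s p; rfl
  | succ k ih =>
      intro p q s
      have hp1 : p ≠ max p q + 1 := by have := Nat.le_max_left p q; omega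
      have hq1 : q ≠ max p q + 1 := by have := Nat.le_max_right p q; omega
      have hp2 : p ≠ max p q + 2 := by have := Nat.le_max_left p q; omega
      have hq2 : q ≠ max p q + 2 := by have := Nat.le_max_right p q; omega
      have h12 : (max p q + 1) ≠ max p q + 2 := by omega
      rw [mtype_succ_eq]
      simp only [eta, FOSat, ih, Function.update_self, Function.update_of_ne hp1,
        Function.update_of_ne hq1, Function.update_of_ne hp2, Function.update_of_ne hq2,
        Function.update_of_ne h12]
      constructor
      · rintro ⟨h1, h2⟩
        constructor
        · intro x hx
          rcases h1 x with h | h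
          · exact absurd hx h
          · exact h
        · intro y hy
          rcases h2 y with h | h
          · exact absurd hy h
          · obtain ⟨x, hx, he⟩ := h
            exact ⟨x, hx, he.symm⟩
      · rintro ⟨h1, h2⟩
        constructor
        · intro x
          by_cases hx : R (s p) x
          · exact Or.inr (h1 x hx)
          · exact Or.inl hx
        · intro y
          by_cases hy : R (s q) y
          · obtain ⟨x, hx, he⟩ := h2 y hy
            exact Or.inr ⟨x, hx, he.symm⟩
          · exact Or.inl hy

/-- The core formula: `x` (variable `0`) has two successors of distinct depth-`n` type. -/
def psiCore (n : ℕ) : FOForm :=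
  .ex 1 (.ex 2 (.and (.rel 0 1) (.and (.rel 0 2) (.not (eta n 1 2)))))

/-- Padding by trivial conjuncts to reach the exact required size. -/
def padF : ℕ → FOForm → FOForm
  | 0, φ => φ
  | m + 1, φ => .and (.eq 0 0) (padF m φ)

def psi (n : ℕ) : FOForm := padF (3 * 2 ^ n - 2) (psiCore n)

theorem fosize_padF : ∀ (m : ℕ) (φ : FOForm), fosize (padF m φ) = m + fosize φ := by
  intro m φ
  induction m with
  | zero => simp [padF]
  | succ m ih => simp [padF, fosize, ih]; omega

theorem fosize_psi (n : ℕ) : fosize (psi n) = 3 * 2 ^ (n + 2) - 7 := by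
  have h1 : fosize (psiCore n) = 9 * 2 ^ n - 5 := by
    have h9 : 9 ≤ 9 * 2 ^ n := by
      have : 1 ≤ 2 ^ n := Nat.one_le_two_pow
      omega
    simp only [psiCore, fosize, fosize_eta]
    omega
  have h2 : 2 ^ (n + 2) = 4 * 2 ^ n := by ring
  have h3 : 1 ≤ 2 ^ n := Nat.one_le_two_pow
  rw [psi, fosize_padF, h1]
  omega

theorem padF_sat {W : Type u} (R : W → W → Prop) :
    ∀ (m : ℕ) (φ : FOForm) (s : ℕ → W), FOSat R s (padF m φ) ↔ FOSat R s φ := by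
  intro m φ
  induction m with
  | zero => intro s; rfl
  | succ m ih => intro s; simp [padF, FOSat, ih]

theorem psiCore_sat {W : Type u} (R : W → W → Prop) (n : ℕ) (w : W) (s : ℕ → W)
    (hs : s 0 = w) :
    FOSat R s (psiCore n) ↔ ∃ a b, R w a ∧ R w b ∧ mtype R n a ≠ mtype R n b := by
  have h01 : (0 : ℕ) ≠ 1 := by omega
  have h02 : (0 : ℕ) ≠ 2 := by omega
  have h12 : (1 : ℕ) ≠ 2 := by omega
  simp only [psiCore, FOSat, eta_sat, Function.update_self, Function.update_of_ne h01,
    Function.update_of_ne h02, Function.update_of_ne h12, hs]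

theorem psi_char {W : Type u} (R : W → W → Prop) (n : ℕ) (w : W) :
    (∀ s : ℕ → W, s 0 = w → FOSat R s (psi n)) ↔
      ∃ a b, R w a ∧ R w b ∧ mtype R n a ≠ mtype R n b := by
  constructor
  · intro H
    have := H (fun _ => w) rfl
    rw [psi, padF_sat] at this
    exact (psiCore_sat R n w _ rfl).mp this
  · intro H s hs
    rw [psi, padF_sat]
    exact (psiCore_sat R n w s hs).mpr H

/-! ### ML formulas: characteristic formulas for types -/

def lAnd : List MLF → MLF
  | [] => .top
  | φ :: l => .and φ (lAnd l)

def lOr : List MLF → MLF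
  | [] => .bot
  | φ :: l => .or φ (lOr l)

theorem sat_lAnd (M : KripkeModel.{u} Empty) (w : M.W) :
    ∀ l : List MLF, MLFSat M w (lAnd l) ↔ ∀ φ ∈ l, MLFSat M w φ := by
  intro l
  induction l with
  | nil => simp [lAnd, MLFSat]
  | cons φ l ih => simp [lAnd, MLFSat, ih]

theorem sat_lOr (M : KripkeModel.{u} Empty) (w : M.W) :
    ∀ l : List MLF, MLFSat M w (lOr l) ↔ ∃ φ ∈ l, MLFSat M w φ := by
  intro l
  induction l with
  | nil => simp [lOr, MLFSat]
  | cons φ l ih => simp [lOr, MLFSat, ih]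

/-- The list of elements of `T k` satisfying `t : T (k+1)`. -/
noncomputable def tList {k : ℕ} (t : T k → Prop) : List (T k) :=
  (@Finset.filter (T k) t (Classical.decPred t) Finset.univ).toList

theorem mem_tList {k : ℕ} (t : T k → Prop) (s : T k) : s ∈ tList t ↔ t s := by
  simp [tList, Finset.mem_toList, Finset.mem_filter]

/-- Characteristic ML formula of a depth-`k` type. -/
noncomputable def chi : (k : ℕ) → T k → MLF
  | 0, _ => .top
  | k + 1, t =>
      .and (lAnd ((tList t).map (fun s => .dia (chi k s))))
        (.box (lOr ((tList t).map (chi k))))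

theorem chi_sat (M : KripkeModel.{u} Empty) :
    ∀ (k : ℕ) (t : T k) (w : M.W), MLFSat M w (chi k t) ↔ mtype M.R k w = t := by
  intro k
  induction k with
  | zero =>
      intro t w
      constructor
      · intro _; rfl
      · intro _; trivial
  | succ k ih =>
      intro t w
      show MLFSat M w (.and _ _) ↔ _
      simp only [MLFSat, sat_lAnd, sat_lOr, List.mem_map, mem_tList]
      constructor
      · rintro ⟨h1, h2⟩
        funext s
        apply propext
        constructor
        · rintro ⟨x, hx, rfl⟩
          obtain ⟨φ, ⟨s', hs', rfl⟩, hφ⟩ := h2 x hx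
          have := (ih s' x).mp hφ
          rw [this]; exact (mem_tList _ _).mp hs'
        · intro hts
          have := h1 (.dia (chi k s)) ⟨s, (mem_tList _ _).mpr hts, rfl⟩
          obtain ⟨x, hx, hφ⟩ := this
          exact ⟨x, hx, (ih s x).mp hφ⟩
      · intro ht
        constructor
        · rintro φ ⟨s, hs, rfl⟩
          have hs := (mem_tList _ _).mp hs
          rw [← ht] at hs
          obtain ⟨x, hx, hm⟩ := hs
          exact ⟨x, hx, (ih s x).mpr hm⟩
        · intro x hx
          refine ⟨chi k (mtype M.R k x), ⟨mtype M.R k x, ?_, rfl⟩, (ih _ x).mpr rfl⟩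
          refine (mem_tList _ _).mpr ?_
          rw [← ht]
          exact ⟨x, hx, rfl⟩

/-- ML formula equivalent to `psi n`. -/
noncomputable def theta0 (n : ℕ) : MLF :=
  lOr (((@Finset.filter (T n × T n) (fun p => p.1 ≠ p.2) (Classical.decPred _)
    Finset.univ).toList).map (fun p => .and (.dia (chi n p.1)) (.dia (chi n p.2))))

theorem theta0_sat (M : KripkeModel.{u} Empty) (n : ℕ) (w : M.W) :
    MLFSat M w (theta0 n) ↔
      ∃ a b, M.R w a ∧ M.R w b ∧ mtype M.R n a ≠ mtype M.R n b := by
  simp only [theta0, sat_lOr, List.mem_map, Finset.mem_toList, Finset.mem_filter,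
    Finset.mem_univ, true_and]
  constructor
  · rintro ⟨φ, ⟨⟨t, t'⟩, hne, rfl⟩, hφ⟩
    obtain ⟨⟨a, ha, hta⟩, ⟨b, hb, htb⟩⟩ := hφ
    rw [chi_sat] at hta htb
    exact ⟨a, b, ha, hb, by rw [hta, htb]; exact hne⟩
  · rintro ⟨a, b, ha, hb, hne⟩
    refine ⟨_, ⟨(mtype M.R n a, mtype M.R n b), hne, rfl⟩, ?_⟩
    exact ⟨⟨a, ha, (chi_sat M n _ a).mpr rfl⟩, ⟨b, hb, (chi_sat M n _ b).mpr rfl⟩⟩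

theorem theta0_equiv (n : ℕ) : MLFOEquiv.{u} (theta0 n) (psi n) := by
  intro P
  rw [theta0_sat, psi_char]

/-! ### Bisimulation invariance -/

theorem bisim_mtype {Φ : Type} {M : KripkeModel.{u} Φ} {N : KripkeModel.{v} Φ}
    (Z : M.W → N.W → Prop)
    (hf : ∀ a b, Z a b → ∀ c, M.R a c → ∃ d, N.R b d ∧ Z c d)
    (hb : ∀ a b, Z a b → ∀ d, N.R b d → ∃ c, M.R a c ∧ Z c d) :
    ∀ (k : ℕ) (a : M.W) (b : N.W), Z a b → mtype M.R k a = mtype N.R k b := by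
  intro k
  induction k with
  | zero => intro a b _; rfl
  | succ k ih =>
      intro a b hZ
      rw [mtype_succ_eq]
      constructor
      · intro x hx
        obtain ⟨y, hy, hZ'⟩ := hf a b hZ x hx
        exact ⟨y, hy, ih x y hZ'⟩
      · intro y hy
        obtain ⟨x, hx, hZ'⟩ := hb a b hZ y hy
        exact ⟨x, hx, ih x y hZ'⟩


/-! ### Star models for the lower bound -/

def CanW : Type := Σ k : ℕ, T k

/-- Canonical relation: a level-`(k+1)` type points to the level-`k` types it contains. -/
def CanR : CanW → CanW → Prop := fun a b => ∃ h : a.1 = b.1 + 1, (h ▸ a.2) b.2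

theorem canR_mk {k : ℕ} (t : T (k + 1)) (s : T k) :
    CanR ⟨k + 1, t⟩ ⟨k, s⟩ ↔ t s := by
  constructor
  · rintro ⟨h, hs⟩
    exact hs
  · intro h
    exact ⟨rfl, h⟩

theorem canR_succ {k : ℕ} (t : T (k + 1)) (b : CanW) :
    CanR ⟨k + 1, t⟩ b ↔ ∃ s : T k, t s ∧ b = ⟨k, s⟩ := by
  constructor
  · intro hc
    obtain ⟨j, r⟩ := b
    obtain ⟨h, hs⟩ := hc
    have hj : k = j := Nat.succ_injective h
    subst hj
    exact ⟨r, hs, rfl⟩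
  · rintro ⟨s, hs, rfl⟩
    exact ⟨rfl, hs⟩

theorem canR_zero {t : T 0} (b : CanW) : ¬ CanR ⟨0, t⟩ b := by
  rintro ⟨h, -⟩
  exact Nat.succ_ne_zero _ h.symm

/-- Relation of the star model: the root `none` sees the level-`n` types in `F`;
internal nodes are related by `CanR`. -/
def StarR (n : ℕ) (F : T n → Prop) : Option CanW → Option CanW → Prop :=
  fun a b =>
    match a, b with
    | none, some b => ∃ h : b.1 = n, F (h ▸ b.2)
    | some a, some b => CanR a b
    | _, none => False

/-- The star model, lifted to universe `u`. -/
def Star (n : ℕ) (F : T n → Prop) : KripkeModel.{u} Empty :=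
  ⟨ULift.{u} (Option CanW), fun a b => StarR n F a.down b.down, fun p _ => p.elim⟩

def root (n : ℕ) (F : T n → Prop) : (Star.{u} n F).W := ⟨none⟩

def nd (n : ℕ) (F : T n → Prop) (a : CanW) : (Star.{u} n F).W := ⟨some a⟩

theorem starR_root (n : ℕ) (F : T n → Prop) (u : Option CanW) :
    StarR n F none u ↔ ∃ t : T n, F t ∧ u = some ⟨n, t⟩ := by
  constructor
  · intro h
    cases u with
    | none => exact h.elim
    | some b =>
        obtain ⟨k, s⟩ := b
        obtain ⟨h, hF⟩ := h
        have hk : k = n := h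
        subst hk
        exact ⟨s, hF, rfl⟩
  · rintro ⟨t, hF, rfl⟩
    exact ⟨rfl, hF⟩

theorem starR_some (n : ℕ) (F : T n → Prop) (a : CanW) (u : Option CanW) :
    StarR n F (some a) u ↔ ∃ b : CanW, CanR a b ∧ u = some b := by
  constructor
  · intro h
    cases u with
    | none => exact h.elim
    | some b => exact ⟨b, h, rfl⟩
  · rintro ⟨b', hb, rfl⟩
    exact hb

theorem mtype_nd (n : ℕ) (F : T n → Prop) :
    ∀ (k : ℕ) (t : T k), mtype (Star.{u} n F).R k (nd n F ⟨k, t⟩) = t := by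
  intro k
  induction k with
  | zero => intro t; rfl
  | succ k ih =>
      intro t
      funext s
      apply propext
      constructor
      · rintro ⟨x, hx, rfl⟩
        have : StarR n F (some (⟨k + 1, t⟩ : CanW)) x.down := hx
        obtain ⟨b, hb, he⟩ := (starR_some n F ⟨k + 1, t⟩ x.down).mp this
        obtain ⟨s', hs', rfl⟩ := (canR_succ t b).mp hb
        have hxe : x = nd n F ⟨k, s'⟩ := by
          cases x; cases he; rfl
        rw [hxe, ih s']
        exact hs'
      · intro hts
        refine ⟨nd n F ⟨k, s⟩, ?_, ih s⟩
        show StarR n F (some ⟨k + 1, t⟩) (some ⟨k, s⟩)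
        exact (canR_mk t s).mpr hts

/-- Satisfaction at internal nodes does not depend on the root's outgoing edges. -/
theorem sat_nd_indep (n : ℕ) (F G : T n → Prop) :
    ∀ (φ : MLF) (a : CanW),
      MLFSat (Star.{u} n F) (nd n F a) φ ↔ MLFSat (Star.{u} n G) (nd n G a) φ := by
  intro φ
  induction φ with
  | top => intro a; exact Iff.rfl
  | bot => intro a; exact Iff.rfl
  | and φ ψ ihφ ihψ => intro a; exact and_congr (ihφ a) (ihψ a)
  | or φ ψ ihφ ihψ => intro a; exact or_congr (ihφ a) (ihψ a)
  | dia φ ih =>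
      intro a
      show (∃ x, _ ∧ _) ↔ (∃ x, _ ∧ _)
      constructor
      · rintro ⟨x, hx, hφ⟩
        obtain ⟨b, hb, he⟩ := (starR_some n F a x.down).mp hx
        have hxe : x = nd n F b := by cases x; cases he; rfl
        refine ⟨nd n G b, (starR_some n G a _).mpr ⟨b, hb, rfl⟩, ?_⟩
        exact (ih b).mp (hxe ▸ hφ)
      · rintro ⟨x, hx, hφ⟩
        obtain ⟨b, hb, he⟩ := (starR_some n G a x.down).mp hx
        have hxe : x = nd n G b := by cases x; cases he; rfl
        refine ⟨nd n F b, (starR_some n F a _).mpr ⟨b, hb, rfl⟩, ?_⟩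
        exact (ih b).mpr (hxe ▸ hφ)
  | box φ ih =>
      intro a
      show (∀ x, _ → _) ↔ (∀ x, _ → _)
      constructor
      · intro h x hx
        obtain ⟨b, hb, he⟩ := (starR_some n G a x.down).mp hx
        have hxe : x = nd n G b := by cases x; cases he; rfl
        rw [hxe]
        exact (ih b).mp (h (nd n F b) ((starR_some n F a _).mpr ⟨b, hb, rfl⟩))
      · intro h x hx
        obtain ⟨b, hb, he⟩ := (starR_some n F a x.down).mp hx
        have hxe : x = nd n F b := by cases x; cases he; rfl
        rw [hxe]
        exact (ih b).mpr (h (nd n G b) ((starR_some n G a _).mpr ⟨b, hb, rfl⟩))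

/-- Truth of modal formulas at the root of a star model. -/
def Q (n : ℕ) (t : T n) (φ : MLF) : Prop :=
  MLFSat (Star.{u} n (fun _ => False)) (nd n (fun _ => False) ⟨n, t⟩) φ

theorem sat_root_dia (n : ℕ) (F : T n → Prop) (φ : MLF) :
    MLFSat (Star.{u} n F) (root n F) (.dia φ) ↔ ∃ t, F t ∧ Q.{u} n t φ := by
  show (∃ x, _ ∧ _) ↔ _
  constructor
  · rintro ⟨x, hx, hφ⟩
    obtain ⟨t, ht, he⟩ := (starR_root n F x.down).mp hx
    have hxe : x = nd n F ⟨n, t⟩ := by cases x; cases he; rfl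
    exact ⟨t, ht, (sat_nd_indep n F _ φ _).mp (hxe ▸ hφ)⟩
  · rintro ⟨t, ht, hQ⟩
    refine ⟨nd n F ⟨n, t⟩, (starR_root n F _).mpr ⟨t, ht, rfl⟩, ?_⟩
    exact (sat_nd_indep n F _ φ _).mpr hQ

theorem sat_root_box (n : ℕ) (F : T n → Prop) (φ : MLF) :
    MLFSat (Star.{u} n F) (root n F) (.box φ) ↔ ∀ t, F t → Q.{u} n t φ := by
  show (∀ x, _ → _) ↔ _
  constructor
  · intro h t ht
    have := h (nd n F ⟨n, t⟩) ((starR_root n F _).mpr ⟨t, ht, rfl⟩)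
    exact (sat_nd_indep n F _ φ _).mp this
  · intro h x hx
    obtain ⟨t, ht, he⟩ := (starR_root n F x.down).mp hx
    have hxe : x = nd n F ⟨n, t⟩ := by cases x; cases he; rfl
    rw [hxe]
    exact (sat_nd_indep n F _ φ _).mpr (h t ht)

/-- The FO condition at the root of a star model. -/
theorem star_psi_char (n : ℕ) (F : T n → Prop) :
    (∃ a b, (Star.{u} n F).R (root n F) a ∧ (Star.{u} n F).R (root n F) b ∧
        mtype (Star.{u} n F).R n a ≠ mtype (Star.{u} n F).R n b) ↔
      ∃ t t' : T n, F t ∧ F t' ∧ t ≠ t' := by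
  constructor
  · rintro ⟨a, b, ha, hb, hne⟩
    obtain ⟨t, ht, hea⟩ := (starR_root n F a.down).mp ha
    obtain ⟨t', ht', heb⟩ := (starR_root n F b.down).mp hb
    have hae : a = nd n F ⟨n, t⟩ := by cases a; cases hea; rfl
    have hbe : b = nd n F ⟨n, t'⟩ := by cases b; cases heb; rfl
    refine ⟨t, t', ht, ht', ?_⟩
    intro h
    apply hne
    rw [hae, hbe, mtype_nd, mtype_nd, h]
  · rintro ⟨t, t', ht, ht', hne⟩
    refine ⟨nd n F ⟨n, t⟩, nd n F ⟨n, t'⟩,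
      (starR_root n F _).mpr ⟨t, ht, rfl⟩, (starR_root n F _).mpr ⟨t', ht', rfl⟩, ?_⟩
    rw [mtype_nd, mtype_nd]
    exact hne

/-! ### Top-level modal subformulas and the key counting lemma -/

def topMods : MLF → List MLF
  | .top => []
  | .bot => []
  | .and φ ψ => topMods φ ++ topMods ψ
  | .or φ ψ => topMods φ ++ topMods ψ
  | .dia φ => [.dia φ]
  | .box φ => [.box φ]

theorem len_topMods : ∀ θ : MLF, (topMods θ).length ≤ mlfms θ := by
  intro θ
  induction θ with
  | top => simp [topMods, mlfms]
  | bot => simp [topMods, mlfms]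
  | and φ ψ ihφ ihψ => simp only [topMods, mlfms, List.length_append]; omega
  | or φ ψ ihφ ihψ => simp only [topMods, mlfms, List.length_append]; omega
  | dia φ ih => simp [topMods, mlfms]
  | box φ ih => simp [topMods, mlfms]

def arg : MLF → MLF
  | .dia φ => φ
  | .box φ => φ
  | φ => φ

theorem topMods_shape : ∀ θ : MLF, ∀ μ ∈ topMods θ, μ = .dia (arg μ) ∨ μ = .box (arg μ) := by
  intro θ
  induction θ with
  | top => intro μ h; exact absurd h List.not_mem_nil
  | bot => intro μ h; exact absurd h List.not_mem_nil
  | and φ ψ ihφ ihψ =>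
      intro μ h
      rcases List.mem_append.mp h with h | h
      · exact ihφ μ h
      · exact ihψ μ h
  | or φ ψ ihφ ihψ =>
      intro μ h
      rcases List.mem_append.mp h with h | h
      · exact ihφ μ h
      · exact ihψ μ h
  | dia φ ih =>
      intro μ h
      rw [List.mem_singleton.mp h]
      exact Or.inl rfl
  | box φ ih =>
      intro μ h
      rw [List.mem_singleton.mp h]
      exact Or.inr rfl

theorem key_lemma (n : ℕ) (F G : T n → Prop) :
    ∀ θ : MLF,
      (∀ μ ∈ topMods θ, (MLFSat (Star.{u} n F) (root n F) μ ↔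
          MLFSat (Star.{u} n G) (root n G) μ)) →
      (MLFSat (Star.{u} n F) (root n F) θ ↔ MLFSat (Star.{u} n G) (root n G) θ) := by
  intro θ
  induction θ with
  | top => intro _; exact Iff.rfl
  | bot => intro _; exact Iff.rfl
  | and φ ψ ihφ ihψ =>
      intro h
      exact and_congr
        (ihφ fun μ hμ => h μ (List.mem_append.mpr (Or.inl hμ)))
        (ihψ fun μ hμ => h μ (List.mem_append.mpr (Or.inr hμ)))
  | or φ ψ ihφ ihψ =>
      intro h
      exact or_congr
        (ihφ fun μ hμ => h μ (List.mem_append.mpr (Or.inl hμ)))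
        (ihψ fun μ hμ => h μ (List.mem_append.mpr (Or.inr hμ)))
  | dia φ ih => intro h; exact h _ (List.mem_singleton_self _)
  | box φ ih => intro h; exact h _ (List.mem_singleton_self _)


/-! ### The lower bound -/

theorem lower_bound (n : ℕ) (hn : 1 ≤ n) (θ : MLF) (hequiv : MLFOEquiv.{u} θ (psi n)) :
    tower (n - 1) ≤ mlfms θ + mlfcs θ := by
  have hSat : ∀ F : T n → Prop, MLFSat (Star.{u} n F) (root n F) θ ↔
      ∃ t t' : T n, F t ∧ F t' ∧ t ≠ t' := by
    intro F
    exact (hequiv ⟨Star.{u} n F, root n F⟩).trans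
      ((psi_char (Star.{u} n F).R n (root n F)).trans (star_psi_char n F))
  set L := topMods θ with hLdef
  let f : T n → (Fin L.length → Prop) := fun t i => Q.{u} n t (arg (L.get i))
  have hinj : Function.Injective f := by
    intro t t' hf
    by_contra hne
    have hQiff : ∀ μ ∈ L, (Q.{u} n t (arg μ) ↔ Q.{u} n t' (arg μ)) := by
      intro μ hμ
      obtain ⟨i, hi⟩ := List.mem_iff_get.mp hμ
      have hfi : Q.{u} n t (arg (L.get i)) = Q.{u} n t' (arg (L.get i)) := congrFun hf i
      rw [hi] at hfi
      exact iff_of_eq hfi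
    have hsig : ∀ μ ∈ topMods θ,
        (MLFSat (Star.{u} n (fun s => s = t ∨ s = t'))
            (root n (fun s => s = t ∨ s = t')) μ ↔
          MLFSat (Star.{u} n (fun s => s = t)) (root n (fun s => s = t)) μ) := by
      intro μ hμ
      have hQμ := hQiff μ hμ
      rcases topMods_shape θ μ hμ with he | he
      · rw [he, sat_root_dia, sat_root_dia]
        constructor
        · rintro ⟨s, hs, hQs⟩
          rcases hs with rfl | rfl
          · exact ⟨s, rfl, hQs⟩
          · exact ⟨t, rfl, hQμ.mpr hQs⟩
        · rintro ⟨s, rfl, hQs⟩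
          exact ⟨s, Or.inl rfl, hQs⟩
      · rw [he, sat_root_box, sat_root_box]
        constructor
        · intro h s hs
          subst hs
          exact h s (Or.inl rfl)
        · intro h s hs
          rcases hs with rfl | rfl
          · exact h s rfl
          · exact hQμ.mp (h t rfl)
    have hkey := key_lemma.{u} n (fun s => s = t ∨ s = t') (fun s => s = t) θ hsig
    have h2 : MLFSat (Star.{u} n (fun s => s = t ∨ s = t'))
        (root n (fun s => s = t ∨ s = t')) θ :=
      (hSat _).mpr ⟨t, t', Or.inl rfl, Or.inr rfl, hne⟩
    have h3 : ¬ MLFSat (Star.{u} n (fun s => s = t)) (root n (fun s => s = t)) θ := by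
      rw [hSat]
      rintro ⟨a, b, rfl, rfl, hab⟩
      exact hab rfl
    exact h3 (hkey.mp h2)
  have hcard : Fintype.card (T n) ≤ Fintype.card (Fin L.length → Prop) :=
    Fintype.card_le_of_injective f hinj
  have hc2 : Fintype.card (Fin L.length → Prop) = 2 ^ L.length := by
    rw [Fintype.card_fun, Fintype.card_prop, Fintype.card_fin]
  rw [card_T, hc2] at hcard
  obtain ⟨m, rfl⟩ : ∃ m, n = m + 1 := ⟨n - 1, by omega⟩
  rw [tower] at hcard
  have hlen : tower m ≤ L.length := (Nat.pow_le_pow_iff_right (by norm_num)).mp hcard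
  have hms : L.length ≤ mlfms θ := len_topMods θ
  simp only [Nat.add_sub_cancel]
  omega


end HVAux

/-- **Corollary 19 (Hella–Vilander).**  Bisimulation invariant `FO` is nonelementarily
more succinct than `ML`: for every `n ≥ 1` there is a first-order formula `φₙ(x)` of size
`3 · 2^(n+2) - 7` (hence `O(2ⁿ)`) whose class of pointed frames is bisimulation invariant
and definable in `ML`, while every `ML`-formula defining the same class has size at least
`tower (n - 1)`. -/
theorem fo_nonelementarily_more_succinct_than_ml (n : ℕ) (hn : 1 ≤ n) :
    ∃ ψ : FOForm, fosize ψ = 3 * 2 ^ (n + 2) - 7 ∧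
      (∀ P Q : PointedModel.{u} Empty, Bisimilar P.M P.w Q.M Q.w →
        (∀ s : ℕ → P.M.W, s 0 = P.w → FOSat P.M.R s ψ) →
        (∀ s : ℕ → Q.M.W, s 0 = Q.w → FOSat Q.M.R s ψ)) ∧
      (∃ θ : MLF, MLFOEquiv.{u} θ ψ) ∧
      (∀ θ : MLF, MLFOEquiv.{u} θ ψ → tower (n - 1) ≤ mlfms θ + mlfcs θ) := by
  refine ⟨HVAux.psi n, HVAux.fosize_psi n, ?_, ⟨HVAux.theta0 n, HVAux.theta0_equiv n⟩,
    fun θ hθ => HVAux.lower_bound n hn θ hθ⟩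
  rintro P P' ⟨Z, hZw, -, hf, hb⟩ hP
  rw [HVAux.psi_char] at hP ⊢
  obtain ⟨a, b, ha, hb', hne⟩ := hP
  obtain ⟨a', ha', hZa⟩ := hf _ _ hZw a ha
  obtain ⟨b', hb'', hZb⟩ := hf _ _ hZw b hb'
  refine ⟨a', b', ha', hb'', ?_⟩
  rw [← HVAux.bisim_mtype Z hf hb n a a' hZa, ← HVAux.bisim_mtype Z hf hb n b b' hZb]
  exact hne
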